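/- arXiv:1310.1141 — 2 statements merged into one kernel-verified Lean document; each statement's English description precedes it below -/
import Mathlib

section
/- Let {ψ_j}_{j∈ℕ} be a frame for a closed subspace S of a Hilbert space H with frame bounds c₁ ≤ c₂, and let S be the frame operator S f = Σ_j ⟨f, ψ_j⟩ ψ_j. If T is a closed subspace with cos(θ_{T S}) > 0, then for all φ ∈ T: c₁ cos²(θ_{T S}) ‖φ‖² ≤ ⟨S φ, φ⟩ ≤ c₂ ‖φ‖². -/
open InnerProductSpace

/-- The cosine of the subspace angle between closed subspaces `A` and `B` of a Hilbert
space: `cos θ_{AB} = inf_{a ∈ A, ‖a‖ = 1} ‖P_B a‖`. -/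
noncomputable def cosAngle {H : Type*} [NormedAddCommGroup H] [InnerProductSpace ℂ H]
    (A B : Submodule ℂ H) [Submodule.HasOrthogonalProjection B] : ℝ :=
  ⨅ a : {x : H // x ∈ A ∧ ‖x‖ = 1}, ‖((Submodule.orthogonalProjectionOnto B (a : H)) : H)‖

open scoped ComplexInnerProductSpace in
/-- If `{ψ_j}` is a frame for a closed subspace `S` with bounds `c₁ ≤ c₂`, `𝒮` is the frame
operator, and `T` is a closed subspace with `cos θ_{T S} > 0`, then for all `φ ∈ T`:
`c₁ cos²(θ_{T S}) ‖φ‖² ≤ ⟨𝒮 φ, φ⟩ ≤ c₂ ‖φ‖²`. -/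
theorem frame_operator_bounds_on_T
    {H : Type*} [NormedAddCommGroup H] [InnerProductSpace ℂ H] [CompleteSpace H]
    (S T : Submodule ℂ H) [CompleteSpace S] [CompleteSpace T]
    (ψ : ℕ → H) (hψS : ∀ j, ψ j ∈ S) (c₁ c₂ : ℝ) (hc₁ : 0 < c₁) (hc : c₁ ≤ c₂)
    (hframe : ∀ f ∈ S,
      c₁ * ‖f‖ ^ 2 ≤ ∑' j, ‖⟪ψ j, f⟫‖ ^ 2 ∧ ∑' j, ‖⟪ψ j, f⟫‖ ^ 2 ≤ c₂ * ‖f‖ ^ 2)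
    (𝒮 : H →L[ℂ] H) (h𝒮 : ∀ f, 𝒮 f = ∑' j, ⟪ψ j, f⟫ • ψ j)
    (hcos : 0 < cosAngle T S) :
    ∀ φ ∈ T,
      c₁ * cosAngle T S ^ 2 * ‖φ‖ ^ 2 ≤ (⟪𝒮 φ, φ⟫).re ∧
      (⟪𝒮 φ, φ⟫).re ≤ c₂ * ‖φ‖ ^ 2 := by
  -- summability of frame coefficients for any `f ∈ S`
  have hS2 : ∀ f ∈ S, Summable (fun j => ‖⟪ψ j, f⟫‖ ^ 2) := by
    intro f hf
    by_contra h
    have h0 : (∑' j, ‖⟪ψ j, f⟫‖ ^ 2) = 0 := tsum_eq_zero_of_not_summable h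
    have h1 := (hframe f hf).1
    rw [h0] at h1
    have hf0 : f = 0 := by
      have h2 : ‖f‖ ^ 2 ≤ 0 := by nlinarith
      have h3 : ‖f‖ = 0 := by nlinarith [norm_nonneg f, sq_nonneg ‖f‖]
      exact norm_eq_zero.mp h3
    apply h
    have : (fun j => ‖⟪ψ j, f⟫‖ ^ 2) = fun _ => 0 := by
      funext j; simp [hf0]
    rw [this]
    exact summable_zero
  -- key finite-sum estimate
  have hkey : ∀ (F : Finset ℕ) (c : ℕ → ℂ),
      ‖∑ j ∈ F, c j • ψ j‖ ^ 2 ≤ c₂ * ∑ j ∈ F, ‖c j‖ ^ 2 := by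
    intro F c
    set u : H := ∑ j ∈ F, c j • ψ j with hu_def
    have hu : u ∈ S := Submodule.sum_mem _ fun j _ => Submodule.smul_mem _ _ (hψS j)
    have h1 : (‖u‖ ^ 2 : ℝ) = (⟪u, u⟫).re := (inner_self_eq_norm_sq (𝕜 := ℂ) u).symm
    have h2 : ⟪u, u⟫ = ∑ j ∈ F, (starRingEnd ℂ) (c j) * ⟪ψ j, u⟫ := by
      rw [hu_def, sum_inner]
      exact Finset.sum_congr rfl fun j _ => inner_smul_left _ _ _
    have h3 : (⟪u, u⟫).re ≤ ∑ j ∈ F, ‖c j‖ * ‖⟪ψ j, u⟫‖ := by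
      calc (⟪u, u⟫).re ≤ ‖⟪u, u⟫‖ := Complex.re_le_norm _
        _ ≤ ∑ j ∈ F, ‖(starRingEnd ℂ) (c j) * ⟪ψ j, u⟫‖ := by
            rw [h2]; exact norm_sum_le _ _
        _ = ∑ j ∈ F, ‖c j‖ * ‖⟪ψ j, u⟫‖ := by
            exact Finset.sum_congr rfl fun j _ => by rw [norm_mul, RCLike.norm_conj]
    have h4 : (∑ j ∈ F, ‖c j‖ * ‖⟪ψ j, u⟫‖) ^ 2 ≤
        (∑ j ∈ F, ‖c j‖ ^ 2) * ∑ j ∈ F, ‖⟪ψ j, u⟫‖ ^ 2 :=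
      Finset.sum_mul_sq_le_sq_mul_sq F _ _
    have h5 : (∑ j ∈ F, ‖⟪ψ j, u⟫‖ ^ 2) ≤ c₂ * ‖u‖ ^ 2 := by
      refine le_trans ?_ (hframe u hu).2
      exact Summable.sum_le_tsum F (fun j _ => sq_nonneg _) (hS2 u hu)
    have hcF : 0 ≤ ∑ j ∈ F, ‖c j‖ ^ 2 := Finset.sum_nonneg fun j _ => sq_nonneg _
    have hu2 : 0 ≤ ‖u‖ ^ 2 := sq_nonneg _
    have h6 : (‖u‖ ^ 2) ^ 2 ≤ (∑ j ∈ F, ‖c j‖ ^ 2) * (c₂ * ‖u‖ ^ 2) := by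
      have h3' : ‖u‖ ^ 2 ≤ ∑ j ∈ F, ‖c j‖ * ‖⟪ψ j, u⟫‖ := h1 ▸ h3
      have hnn : 0 ≤ ∑ j ∈ F, ‖c j‖ * ‖⟪ψ j, u⟫‖ :=
        Finset.sum_nonneg fun j _ => mul_nonneg (norm_nonneg _) (norm_nonneg _)
      calc (‖u‖ ^ 2) ^ 2 ≤ (∑ j ∈ F, ‖c j‖ * ‖⟪ψ j, u⟫‖) ^ 2 := by nlinarith
        _ ≤ (∑ j ∈ F, ‖c j‖ ^ 2) * ∑ j ∈ F, ‖⟪ψ j, u⟫‖ ^ 2 := h4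
        _ ≤ (∑ j ∈ F, ‖c j‖ ^ 2) * (c₂ * ‖u‖ ^ 2) := by
            exact mul_le_mul_of_nonneg_left h5 hcF
    rcases eq_or_lt_of_le hu2 with h | h
    · nlinarith
    · nlinarith
  intro φ hφ
  set g : H := (Submodule.orthogonalProjectionOnto S φ : H) with hg_def
  have hg : g ∈ S := (Submodule.orthogonalProjectionOnto S φ).2
  have hperp : φ - g ∈ Sᗮ := Submodule.sub_starProjection_mem_orthogonal (K := S) φ
  have hcj : ∀ j, ⟪ψ j, φ⟫ = ⟪ψ j, g⟫ := by
    intro j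
    have h2 := (Submodule.mem_orthogonal S (φ - g)).1 hperp (ψ j) (hψS j)
    rw [inner_sub_right] at h2
    linear_combination h2
  have hsum2 := hS2 g hg
  -- summability of the frame-operator series at `g`
  have hsum : Summable (fun j => ⟪ψ j, g⟫ • ψ j) := by
    rw [summable_iff_vanishing]
    intro e he
    obtain ⟨ε, hε, hball⟩ := Metric.mem_nhds_iff.mp he
    have hc₂ : (0 : ℝ) < c₂ := lt_of_lt_of_le hc₁ hc
    have hδ : (0 : ℝ) < ε ^ 2 / c₂ := by positivity
    obtain ⟨s, hs⟩ := summable_iff_vanishing.mp hsum2 (Metric.ball 0 (ε ^ 2 / c₂))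
      (Metric.ball_mem_nhds 0 hδ)
    refine ⟨s, fun t ht => ?_⟩
    apply hball
    rw [Metric.mem_ball, dist_zero_right]
    have h1 := hs t ht
    rw [Metric.mem_ball, dist_zero_right, Real.norm_eq_abs] at h1
    have h2 : (∑ j ∈ t, ‖⟪ψ j, g⟫‖ ^ 2) < ε ^ 2 / c₂ := lt_of_abs_lt h1
    have h3 := hkey t (fun j => ⟪ψ j, g⟫)
    have h4 : ‖∑ j ∈ t, ⟪ψ j, g⟫ • ψ j‖ ^ 2 < ε ^ 2 := by
      calc ‖∑ j ∈ t, ⟪ψ j, g⟫ • ψ j‖ ^ 2 ≤ c₂ * ∑ j ∈ t, ‖⟪ψ j, g⟫‖ ^ 2 := h3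
        _ < c₂ * (ε ^ 2 / c₂) := by exact mul_lt_mul_of_pos_left h2 hc₂
        _ = ε ^ 2 := by field_simp
    exact lt_of_pow_lt_pow_left₀ 2 (le_of_lt hε) h4
  have hasS : HasSum (fun j => ⟪ψ j, g⟫ • ψ j) (𝒮 g) := by
    rw [h𝒮 g]; exact hsum.hasSum
  have h𝒮φ : 𝒮 φ = 𝒮 g := by
    rw [h𝒮 φ, h𝒮 g]
    exact tsum_congr fun j => by rw [hcj j]
  -- `𝒮 g ∈ S`
  have hclosed : IsClosed (S : Set H) :=
    (completeSpace_coe_iff_isComplete.mp inferInstance).isClosed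
  have hSg_mem : 𝒮 g ∈ S := by
    refine hclosed.mem_of_tendsto hasS (Filter.Eventually.of_forall fun F => ?_)
    exact Submodule.sum_mem _ fun j _ => Submodule.smul_mem _ _ (hψS j)
  -- the main identity
  set t : ℝ := ∑' j, ‖⟪ψ j, g⟫‖ ^ 2 with ht_def
  have hinner : (⟪𝒮 φ, φ⟫).re = t := by
    have e1 : ⟪𝒮 φ, φ⟫ = ⟪𝒮 g, g⟫ := by
      rw [h𝒮φ]
      have h0 : ⟪𝒮 g, φ - g⟫ = 0 :=
        (Submodule.mem_orthogonal S (φ - g)).1 hperp (𝒮 g) hSg_mem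
      rw [inner_sub_right] at h0
      linear_combination h0
    have e2 : ⟪g, 𝒮 g⟫ = (t : ℂ) := by
      have hz : HasSum (fun j => ⟪ψ j, g⟫ * ⟪g, ψ j⟫) ⟪g, 𝒮 g⟫ := by
        have := (innerSL ℂ g).hasSum hasS
        simpa using this
      have hterm : (fun j => ⟪ψ j, g⟫ * ⟪g, ψ j⟫) =
          fun j => ((‖⟪ψ j, g⟫‖ ^ 2 : ℝ) : ℂ) := by
        funext j
        rw [← inner_conj_symm g (ψ j), RCLike.mul_conj]
        norm_num
      rw [hterm] at hz
      have hr : HasSum (fun j => ((‖⟪ψ j, g⟫‖ ^ 2 : ℝ) : ℂ)) ((t : ℝ) : ℂ) :=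
        Complex.ofRealCLM.hasSum hsum2.hasSum
      exact hz.unique hr
    rw [e1, ← inner_conj_symm, e2]
    simp
  have hframeg := hframe g hg
  rw [← ht_def] at hframeg
  -- `cos θ · ‖φ‖ ≤ ‖g‖`
  have hproj : cosAngle T S * ‖φ‖ ≤ ‖g‖ := by
    by_cases hφ0 : φ = 0
    · simp only [hφ0, norm_zero, mul_zero]
      exact norm_nonneg _
    · have hn : (0 : ℝ) < ‖φ‖ := norm_pos_iff.mpr hφ0
      have hbdd : BddBelow (Set.range fun a : {x : H // x ∈ T ∧ ‖x‖ = 1} =>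
          ‖((Submodule.orthogonalProjectionOnto S (a : H)) : H)‖) := by
        refine ⟨0, ?_⟩
        rintro _ ⟨a, rfl⟩
        exact norm_nonneg _
      have hmem : ((‖φ‖⁻¹ : ℝ) : ℂ) • φ ∈ T := Submodule.smul_mem _ _ hφ
      have hnorm : ‖((‖φ‖⁻¹ : ℝ) : ℂ) • φ‖ = 1 := by
        rw [norm_smul, Complex.norm_real, Real.norm_eq_abs, abs_inv, abs_norm]
        field_simp
      have h1 := ciInf_le hbdd (⟨((‖φ‖⁻¹ : ℝ) : ℂ) • φ, hmem, hnorm⟩ :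
        {x : H // x ∈ T ∧ ‖x‖ = 1})
      have h2 : ‖((Submodule.orthogonalProjectionOnto S (((‖φ‖⁻¹ : ℝ) : ℂ) • φ)) : H)‖ =
          ‖φ‖⁻¹ * ‖g‖ := by
        rw [map_smul]
        push_cast
        rw [norm_smul, norm_inv, Complex.norm_real, Real.norm_eq_abs, abs_norm]
      rw [h2] at h1
      calc cosAngle T S * ‖φ‖ ≤ ‖φ‖⁻¹ * ‖g‖ * ‖φ‖ := by
            exact mul_le_mul_of_nonneg_right h1 (le_of_lt hn)
        _ = ‖g‖ := by field_simp
  -- `‖g‖ ≤ ‖φ‖`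
  have hle : ‖g‖ ≤ ‖φ‖ := by
    have h1 := (Submodule.orthogonalProjectionOnto S).le_opNorm φ
    have h2 := Submodule.orthogonalProjectionOnto_norm_le S
    calc ‖g‖ = ‖Submodule.orthogonalProjectionOnto S φ‖ := rfl
      _ ≤ ‖Submodule.orthogonalProjectionOnto S‖ * ‖φ‖ := h1
      _ ≤ 1 * ‖φ‖ := mul_le_mul_of_nonneg_right h2 (norm_nonneg _)
      _ = ‖φ‖ := one_mul _
  constructor
  · rw [hinner]
    have hsq : (cosAngle T S * ‖φ‖) ^ 2 ≤ ‖g‖ ^ 2 :=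
      pow_le_pow_left₀ (mul_nonneg hcos.le (norm_nonneg φ)) hproj 2
    have h1 : c₁ * cosAngle T S ^ 2 * ‖φ‖ ^ 2 ≤ c₁ * ‖g‖ ^ 2 := by nlinarith [hsq]
    linarith [hframeg.1]
  · rw [hinner]
    have hsq : ‖g‖ ^ 2 ≤ ‖φ‖ ^ 2 := pow_le_pow_left₀ (norm_nonneg g) hle 2
    have h1 : c₂ * ‖g‖ ^ 2 ≤ c₂ * ‖φ‖ ^ 2 :=
      mul_le_mul_of_nonneg_left hsq (le_trans hc₁.le hc)
    linarith [hframeg.2]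
end

section
/- Suppose cos(θ_{N,N}) > 0, where θ_{N,N} = θ_{T_N S_N} for finite-dimensional subspaces T_N and S_N of equal dimension. Then the partial frame operator S_N g = Σ_{j=1}^N ⟨g, ψ_j⟩ ψ_j (where S_N = span{ψ_1,…,ψ_N}) restricts to a bijection from T_N onto S_N. -/
open InnerProductSpace
open scoped ComplexInnerProductSpace

/-- If `cos θ_{T_N S_N} > 0` and `dim T_N = dim S_N = N`, then the partial frame operator
`g ↦ ∑_{j<N} ⟨g, ψ_j⟩ ψ_j` restricts to a bijection from `T_N` onto `S_N = span{ψ_1,…,ψ_N}`. -/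
theorem partial_frame_operator_bijOn
    {H : Type*} [NormedAddCommGroup H] [InnerProductSpace ℂ H] [CompleteSpace H]
    (N : ℕ) (ψ : Fin N → H) (T : Submodule ℂ H) [FiniteDimensional ℂ T]
    [Submodule.HasOrthogonalProjection (Submodule.span ℂ (Set.range ψ))]
    (hdimT : Module.finrank ℂ T = N)
    (hdimS : Module.finrank ℂ (Submodule.span ℂ (Set.range ψ)) = N)
    (hcos : 0 < cosAngle T (Submodule.span ℂ (Set.range ψ))) :
    Set.BijOn (fun g : H => ∑ j, ⟪ψ j, g⟫ • ψ j)
      (T : Set H) ((Submodule.span ℂ (Set.range ψ) : Submodule ℂ H) : Set H) := by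
  set S : Submodule ℂ H := Submodule.span ℂ (Set.range ψ) with hS
  haveI : FiniteDimensional ℂ S := FiniteDimensional.span_of_finite ℂ (Set.finite_range ψ)
  -- the frame operator as a linear map
  set Fl : H →ₗ[ℂ] H :=
    (∑ j, ((innerSL ℂ (ψ j)).smulRight (ψ j)).toLinearMap) with hFl
  have hFlapp : ∀ g : H, Fl g = ∑ j, ⟪ψ j, g⟫ • ψ j := by
    intro g
    simp [hFl, LinearMap.sum_apply]
  have hmaps : ∀ g : H, Fl g ∈ S := by
    intro g
    rw [hFlapp]
    exact Submodule.sum_mem _ fun j _ =>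
      Submodule.smul_mem _ _ (Submodule.subset_span ⟨j, rfl⟩)
  -- key: injectivity on T
  have hker : ∀ g ∈ T, Fl g = 0 → g = 0 := by
    intro g hgT hg0
    by_contra hgne
    -- each inner product vanishes
    have hsum : ∑ j, (‖⟪ψ j, g⟫‖ : ℝ) ^ 2 = 0 := by
      have h1 : ⟪g, Fl g⟫ = ∑ j, (‖⟪ψ j, g⟫‖ : ℂ) ^ 2 := by
        rw [hFlapp]
        rw [inner_sum]
        refine Finset.sum_congr rfl fun j _ => ?_
        rw [inner_smul_right, ← inner_conj_symm g (ψ j), RCLike.mul_conj]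
        norm_cast
      have h2 : ⟪g, Fl g⟫ = 0 := by rw [hg0, inner_zero_right]
      have h3 : (∑ j, (‖⟪ψ j, g⟫‖ : ℂ) ^ 2) = 0 := by rw [← h1, h2]
      have h4 : ((∑ j, (‖⟪ψ j, g⟫‖ : ℝ) ^ 2 : ℝ) : ℂ) = 0 := by push_cast; exact h3
      exact_mod_cast h4
    have hinner : ∀ j, ⟪ψ j, g⟫ = 0 := by
      intro j
      have h := (Finset.sum_eq_zero_iff_of_nonneg
        (fun j _ => sq_nonneg (‖⟪ψ j, g⟫‖ : ℝ))).mp hsum j (Finset.mem_univ j)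
      have : ‖⟪ψ j, g⟫‖ = 0 := by
        nlinarith [norm_nonneg (⟪ψ j, g⟫)]
      exact norm_eq_zero.mp this
    -- hence g ⊥ S
    have hgperp : g ∈ Sᗮ := by
      rw [Submodule.mem_orthogonal]
      intro u hu
      induction hu using Submodule.span_induction with
      | mem x hx => obtain ⟨j, rfl⟩ := hx; exact hinner j
      | zero => simp
      | add x y _ _ hx hy => rw [inner_add_left, hx, hy, add_zero]
      | smul c x _ hx => rw [inner_smul_left, hx, mul_zero]
    have hproj : (Submodule.orthogonalProjectionOnto S g : H) = 0 := by
      rw [Submodule.orthogonalProjectionOnto_eq_zero_iff.mpr hgperp]; rfl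
    -- normalize g
    set u : H := (‖g‖ : ℂ)⁻¹ • g with hu
    have hun : ‖u‖ = 1 := by
      rw [hu, norm_smul]
      simp [norm_eq_zero, hgne, inv_mul_cancel₀ (norm_ne_zero_iff.mpr hgne)]
    have huT : u ∈ T := Submodule.smul_mem _ _ hgT
    have hproju : (Submodule.orthogonalProjectionOnto S u : H) = 0 := by
      rw [hu, map_smul]
      simp only [Submodule.coe_smul]
      rw [hproj, smul_zero]
    have hle : cosAngle T S ≤ ‖(Submodule.orthogonalProjectionOnto S u : H)‖ := by
      refine ciInf_le ⟨0, ?_⟩ (⟨u, huT, hun⟩ : {x : H // x ∈ T ∧ ‖x‖ = 1})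
      rintro x ⟨i, rfl⟩
      exact norm_nonneg _
    rw [hproju] at hle
    simp at hle
    exact absurd hcos (not_lt.mpr hle)
  -- restricted linear map from T to S
  set L : T →ₗ[ℂ] S := Fl.restrict (fun x hx => hmaps x) with hL
  have hLinj : Function.Injective L := by
    rw [← LinearMap.ker_eq_bot, Submodule.eq_bot_iff]
    rintro ⟨x, hxT⟩ hx
    have : Fl x = 0 := by
      have := congrArg (Subtype.val) hx
      simpa [hL, LinearMap.restrict_apply] using this
    exact Subtype.ext (hker x hxT this)
  have hLsurj : Function.Surjective L :=
    (LinearMap.injective_iff_surjective_of_finrank_eq_finrank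
      (by rw [hdimT, hdimS])).mp hLinj
  refine ⟨fun g _ => by simp only []; rw [← hFlapp g]; exact hmaps g, ?_, ?_⟩
  · intro g1 hg1 g2 hg2 heq
    have : Fl (g1 - g2) = 0 := by
      rw [map_sub, sub_eq_zero, hFlapp, hFlapp]
      exact heq
    exact sub_eq_zero.mp (hker _ (Submodule.sub_mem T hg1 hg2) this)
  · intro s hs
    obtain ⟨⟨g, hgT⟩, hg⟩ := hLsurj ⟨s, hs⟩
    refine ⟨g, hgT, ?_⟩
    have := congrArg Subtype.val hg
    simpa [hL, LinearMap.restrict_apply, hFlapp] using this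
end
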